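/- arXiv:2310.17610 — 4 statements merged into one kernel-verified Lean document; each statement's English description precedes it below -/
import Mathlib

section
/- Let H be a real Hilbert space, let f : H → ℝ be a convex differentiable function whose gradient ∇f is Lipschitz continuous, and let x : [0,∞) → H be a gradient flow of f which has finite length, i.e. ∫₀^∞ ‖x'(t)‖ dt < ∞. Then there exist a convex continuously differentiable function g : ℝ → ℝ which attains its minimum, and a gradient flow s : [0,∞) → ℝ of g (i.e. s'(t) = −g'(s(t))), such that f(x(t)) = g(s(t)) for all t > 0. -/
open Filter MeasureTheory Set
open scoped Topology
set_option linter.unusedSectionVars false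

namespace GFRed

noncomputable def ell (c : ℝ → ℝ) (t : ℝ) : ℝ :=
  (∫ u in Ioi (0:ℝ), c u) - ∫ u in (0:ℝ)..(max t 0), c u

def SS (c : ℝ → ℝ) (u : ℝ) : Set ℝ := {t | 0 ≤ t ∧ ell c t ≤ u}

noncomputable def tau (c : ℝ → ℝ) (u : ℝ) : ℝ := sInf (SS c u)

noncomputable def GG (c : ℝ → ℝ) (u : ℝ) : ℝ := sSup (c '' SS c u)

variable {c : ℝ → ℝ}

section basic

variable (hc0 : ∀ t, 0 ≤ c t) (hci : IntegrableOn c (Ioi 0))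

include hc0 hci

lemma interv (a b : ℝ) (ha : 0 ≤ a) (hb : 0 ≤ b) :
    IntervalIntegrable c MeasureTheory.volume a b := by
  rw [intervalIntegrable_iff]
  exact hci.mono_set (fun s hs => lt_of_le_of_lt (le_min ha hb) hs.1)

lemma ell_antitone : Antitone (ell c) := by
  intro a b hab
  have h1 : (0:ℝ) ≤ max a 0 := le_max_right _ _
  have h2 : (0:ℝ) ≤ max b 0 := le_max_right _ _
  have h3 : max a 0 ≤ max b 0 := max_le_max hab le_rfl
  have := intervalIntegral.integral_add_adjacent_intervals
    (interv hc0 hci 0 (max a 0) le_rfl h1) (interv hc0 hci (max a 0) (max b 0) h1 h2)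
  have h4 : (0:ℝ) ≤ ∫ u in (max a 0)..(max b 0), c u :=
    intervalIntegral.integral_nonneg h3 (fun u _ => hc0 u)
  simp only [ell]
  linarith

lemma ell_nonneg (t : ℝ) : 0 ≤ ell c t := by
  have h1 : (0:ℝ) ≤ max t 0 := le_max_right _ _
  rw [ell, sub_nonneg, intervalIntegral.integral_of_le h1]
  refine setIntegral_mono_set hci ?_ ?_
  · exact Eventually.of_forall (fun u => hc0 u)
  · exact Eventually.of_forall (fun u hu => hu.1)

lemma ell_zero : ell c 0 = ∫ u in Ioi (0:ℝ), c u := by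
  simp [ell]

lemma ell_sub (a b : ℝ) (ha : 0 ≤ a) (hab : a ≤ b) :
    ell c a - ell c b = ∫ u in a..b, c u := by
  have hb : 0 ≤ b := ha.trans hab
  have := intervalIntegral.integral_add_adjacent_intervals
    (interv hc0 hci 0 a le_rfl ha) (interv hc0 hci a b ha hb)
  simp only [ell, max_eq_left ha, max_eq_left hb]
  linarith

lemma ell_tendsto : Tendsto (ell c) atTop (𝓝 0) := by
  have h := MeasureTheory.intervalIntegral_tendsto_integral_Ioi 0 hci tendsto_id
  have h2 : Tendsto (fun t : ℝ => ∫ u in (0:ℝ)..(max t 0), c u) atTop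
      (𝓝 (∫ u in Ioi (0:ℝ), c u)) := by
    refine h.congr' ?_
    filter_upwards [eventually_ge_atTop (0:ℝ)] with t ht
    rw [max_eq_left ht]; rfl
  have := h2.const_sub (∫ u in Ioi (0:ℝ), c u)
  rw [sub_self] at this; exact this

lemma primitive_contOn : ContinuousOn (fun b => ∫ u in (0:ℝ)..b, c u) (Ici 0) := by
  intro t ht
  have h1 : ContinuousWithinAt (fun b => ∫ u in (0:ℝ)..b, c u) (Icc 0 (t+1)) t :=
    intervalIntegral.continuousWithinAt_primitive (measure_singleton t)
      (by simpa using interv hc0 hci 0 (max 0 (t+1)) le_rfl (le_max_left 0 (t+1)))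
  refine h1.mono_of_mem_nhdsWithin ?_
  rw [← Ici_inter_Iic]
  exact Filter.inter_mem self_mem_nhdsWithin
    (mem_nhdsWithin_of_mem_nhds (Iic_mem_nhds (lt_add_one t)))

lemma ell_cont : Continuous (ell c) := by
  have : Continuous (fun t : ℝ => ∫ u in (0:ℝ)..(max t 0), c u) :=
    (primitive_contOn hc0 hci).comp_continuous
      (continuous_id.max continuous_const) (fun t => le_max_right t 0)
  exact continuous_const.sub this

lemma ell_hasDeriv (hcc : ContinuousOn c (Ici 0)) :
    ∀ t ∈ Ici (0:ℝ), HasDerivWithinAt (ell c) (-(c t)) (Ici 0) t := by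
  intro t ht
  have key : HasDerivWithinAt (fun b => ∫ u in (0:ℝ)..b, c u) (c t) (Ici 0) t := by
    rcases eq_or_lt_of_le (mem_Ici.mp ht) with h | h
    · subst h
      exact intervalIntegral.integral_hasDerivWithinAt_right (s := Ici 0) (t := Ioi 0)
        (interv hc0 hci 0 0 le_rfl le_rfl)
        ⟨Ioi 0, self_mem_nhdsWithin,
          (hcc.mono Ioi_subset_Ici_self).aestronglyMeasurable measurableSet_Ioi⟩
        ((hcc 0 Set.self_mem_Ici).mono Ioi_subset_Ici_self)
    · refine (intervalIntegral.integral_hasDerivAt_right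
        (interv hc0 hci 0 t le_rfl ht)
        ⟨Ici 0, Ici_mem_nhds h, hcc.aestronglyMeasurable measurableSet_Ici⟩
        (hcc.continuousAt (Ici_mem_nhds h))).hasDerivWithinAt
  have key2 := key.const_sub (∫ u in Ioi (0:ℝ), c u)
  refine key2.congr (fun y hy => ?_) ?_
  · simp [ell, max_eq_left (mem_Ici.mp hy)]
  · simp [ell, max_eq_left (mem_Ici.mp ht)]

end basic

section main

variable (hc0 : ∀ t, 0 ≤ c t) (hcc : ContinuousOn c (Ici 0))
  (hca : AntitoneOn c (Ici 0)) (hci : IntegrableOn c (Ioi 0))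

include hc0 hcc hca hci

lemma flat {a b : ℝ} (ha : 0 ≤ a) (hab : a < b) (he : ell c a = ell c b) :
    c a = 0 ∧ ∀ s ∈ Ioc a b, c s = 0 := by
  have hint : ∫ u in a..b, c u = 0 := by
    rw [← ell_sub hc0 hci a b ha hab.le, he, sub_self]
  have hzero : ∀ s ∈ Ioc a b, c s = 0 := by
    intro s hs
    have hs0 : (0:ℝ) ≤ s := ha.trans hs.1.le
    have h1 : ∫ _u in a..s, c s ≤ ∫ u in a..s, c u := by
      refine intervalIntegral.integral_mono_on hs.1.le intervalIntegrable_const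
        (interv hc0 hci a s ha hs0) (fun u hu => ?_)
      exact hca (ha.trans hu.1 : u ∈ Ici 0) (hs0 : s ∈ Ici 0) hu.2
    have h2 : ∫ u in a..s, c u ≤ ∫ u in a..b, c u := by
      have hadd := intervalIntegral.integral_add_adjacent_intervals
        (interv hc0 hci a s ha hs0) (interv hc0 hci s b hs0 (hs0.trans hs.2))
      have h3 : (0:ℝ) ≤ ∫ u in s..b, c u :=
        intervalIntegral.integral_nonneg hs.2 (fun u _ => hc0 u)
      linarith
    rw [intervalIntegral.integral_const, smul_eq_mul] at h1
    have h4 : 0 < s - a := by linarith [hs.1]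
    nlinarith [hc0 s]
  refine ⟨?_, hzero⟩
  have hmem : Ioc a b ∈ 𝓝[Ioi a] a := by
    rw [← Ioi_inter_Iic]
    exact Filter.inter_mem self_mem_nhdsWithin
      (mem_nhdsWithin_of_mem_nhds (Iic_mem_nhds hab))
  have h1 : Tendsto c (𝓝[Ioc a b] a) (𝓝 (c a)) :=
    (hcc a ha).mono_left (nhdsWithin_mono a (fun u hu => ha.trans hu.1.le))
  have h2 : Tendsto c (𝓝[Ioc a b] a) (𝓝 0) := by
    refine tendsto_const_nhds.congr' ?_
    filter_upwards [self_mem_nhdsWithin] with u hu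
    exact (hzero u hu).symm
  have hne : (𝓝[Ioc a b] a).NeBot := by
    rw [← mem_closure_iff_nhdsWithin_neBot, closure_Ioc hab.ne]
    exact ⟨le_rfl, hab.le⟩
  exact tendsto_nhds_unique h1 h2

lemma flat' {a b : ℝ} (ha : 0 ≤ a) (hab : a ≤ b) (he : ell c a = ell c b) :
    c a = c b := by
  rcases eq_or_lt_of_le hab with h | h
  · rw [h]
  · obtain ⟨h1, h2⟩ := flat hc0 hcc hca hci ha h he
    rw [h1, h2 b ⟨h, le_rfl⟩]

lemma ell_eq_zero_imp {t : ℝ} (ht : 0 ≤ t) (h : ell c t = 0) : c t = 0 := by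
  have he : ell c t = ell c (t + 1) := by
    have h1 := ell_antitone hc0 hci (le_of_lt (lt_add_one t))
    have h2 := ell_nonneg hc0 hci (t+1)
    linarith
  exact (flat hc0 hcc hca hci ht (lt_add_one t) he).1

omit hcc hca in
lemma SS_closed (u : ℝ) : IsClosed (SS c u) := by
  have : SS c u = Ici 0 ∩ (ell c) ⁻¹' (Iic u) := by
    ext t; simp [SS, mem_Ici, and_comm]
  rw [this]
  exact isClosed_Ici.inter (isClosed_Iic.preimage (ell_cont hc0 hci))

omit hc0 hcc hca hci in
lemma SS_bddBelow (u : ℝ) : BddBelow (SS c u) := ⟨0, fun t ht => ht.1⟩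

omit hc0 hcc hca hci in
lemma SS_subset {u v : ℝ} (huv : u ≤ v) : SS c u ⊆ SS c v :=
  fun t ht => ⟨ht.1, ht.2.trans huv⟩

omit hcc hca in
lemma SS_nonempty {u : ℝ} (hu : 0 < u) : (SS c u).Nonempty := by
  have h := (ell_tendsto hc0 hci).eventually_lt_const hu
  obtain ⟨t, ht, h2⟩ := (h.and (eventually_ge_atTop (0:ℝ))).exists
  exact ⟨t, h2, ht.le⟩

omit hcc hca in
lemma tau_mem {u : ℝ} (hu : 0 < u) : tau c u ∈ SS c u :=
  (SS_closed hc0 hci u).csInf_mem (SS_nonempty hc0 hci hu) (SS_bddBelow u)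

omit hc0 hcc hca hci in
lemma tau_le {u t : ℝ} (ht : t ∈ SS c u) : tau c u ≤ t := csInf_le (SS_bddBelow u) ht

omit hcc in
lemma GG_eq {u : ℝ} (hu : 0 < u) : GG c u = c (tau c u) := by
  refine IsGreatest.csSup_eq ⟨mem_image_of_mem c (tau_mem hc0 hci hu), ?_⟩
  rintro y ⟨t, ht, rfl⟩
  exact hca (tau_mem hc0 hci hu).1 ht.1 (tau_le ht)

omit hcc hca hci in
lemma GG_nonneg (u : ℝ) : 0 ≤ GG c u :=
  Real.sSup_nonneg (by rintro y ⟨t, _, rfl⟩; exact hc0 t)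

omit hcc hci in
lemma GG_le_c0 (u : ℝ) : GG c u ≤ c 0 := by
  refine Real.sSup_le ?_ (hc0 0)
  rintro y ⟨t, ht, rfl⟩
  exact hca self_mem_Ici ht.1 ht.1

omit hcc hci in
lemma GG_mono : Monotone (GG c) := by
  intro u v huv
  refine Real.sSup_le ?_ (GG_nonneg hc0 v)
  rintro y ⟨t, ht, rfl⟩
  refine le_csSup ⟨c 0, ?_⟩ (mem_image_of_mem c (SS_subset huv ht))
  rintro y ⟨t', ht', rfl⟩
  exact hca self_mem_Ici ht'.1 ht'.1

lemma GG_nonpos {u : ℝ} (hu : u ≤ 0) : GG c u = 0 := by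
  refine le_antisymm (Real.sSup_le ?_ le_rfl) (GG_nonneg hc0 u)
  rintro y ⟨t, ht, rfl⟩
  have h0 : ell c t = 0 := le_antisymm (ht.2.trans hu) (ell_nonneg hc0 hci t)
  exact le_of_eq (ell_eq_zero_imp hc0 hcc hca hci ht.1 h0)

omit hcc in
lemma GG_flat_top {u : ℝ} (hu : ell c 0 ≤ u) : GG c u = c 0 := by
  refine le_antisymm (GG_le_c0 hc0 hca u) ?_
  refine le_csSup ⟨c 0, ?_⟩ (mem_image_of_mem c ⟨le_rfl, hu⟩)
  rintro y ⟨t', ht', rfl⟩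
  exact hca self_mem_Ici ht'.1 ht'.1

lemma GG_ell {t : ℝ} (ht : 0 ≤ t) : GG c (ell c t) = c t := by
  rcases (ell_nonneg hc0 hci t).lt_or_eq with h | h
  · rw [GG_eq hc0 hca hci h]
    have htm : t ∈ SS c (ell c t) := ⟨ht, le_rfl⟩
    have h1 : tau c (ell c t) ≤ t := tau_le htm
    have h2 := (tau_mem hc0 hci h).1
    have h3 : ell c (tau c (ell c t)) = ell c t :=
      le_antisymm (tau_mem hc0 hci h).2 (ell_antitone hc0 hci h1)
    exact flat' hc0 hcc hca hci h2 h1 h3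
  · rw [← h, GG_nonpos hc0 hcc hca hci le_rfl,
      ell_eq_zero_imp hc0 hcc hca hci ht h.symm]

omit hcc hca in
lemma tau_anti {u v : ℝ} (hu : 0 < u) (huv : u ≤ v) : tau c v ≤ tau c u :=
  csInf_le_csInf (SS_bddBelow v) (SS_nonempty hc0 hci hu) (SS_subset huv)

omit hcc hca in
lemma ell_tau_ge {u : ℝ} (hu : 0 < u) (hu2 : u ≤ ell c 0) :
    u ≤ ell c (tau c u) := by
  rcases ((tau_mem hc0 hci hu).1).lt_or_eq with h | h
  · have hlim : Tendsto (ell c) (𝓝[Iio (tau c u)] (tau c u))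
        (𝓝 (ell c (tau c u))) :=
      ((ell_cont hc0 hci).tendsto _).mono_left nhdsWithin_le_nhds
    have hne : (𝓝[Iio (tau c u)] (tau c u)).NeBot := inferInstance
    refine ge_of_tendsto hlim ?_
    have hmem : Ioo 0 (tau c u) ∈ 𝓝[Iio (tau c u)] (tau c u) := by
      rw [← Ioi_inter_Iio]
      exact Filter.inter_mem (mem_nhdsWithin_of_mem_nhds (Ioi_mem_nhds h))
        self_mem_nhdsWithin
    filter_upwards [hmem] with s hs
    by_contra hcon
    push_neg at hcon
    exact absurd (tau_le ⟨hs.1.le, hcon.le⟩) (not_le.2 hs.2)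
  · rw [← h]
    simpa using hu2

lemma exists_small_c {ε : ℝ} (hε : 0 < ε) (hpos : 0 < ell c 0) :
    ∃ T, 0 ≤ T ∧ c T ≤ ε ∧ 0 < ell c T := by
  by_cases hA : ∃ t, 0 ≤ t ∧ ell c t = 0
  · -- the zero set is nonempty; approach its infimum from the left
    have hSne : (SS c 0).Nonempty := by
      obtain ⟨t, ht, h⟩ := hA; exact ⟨t, ht, h.le⟩
    set T₀ := sInf (SS c 0) with hT₀
    have hT₀mem : T₀ ∈ SS c 0 :=
      (SS_closed hc0 hci 0).csInf_mem hSne (SS_bddBelow 0)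
    have hT₀0 : ell c T₀ = 0 := le_antisymm hT₀mem.2 (ell_nonneg hc0 hci T₀)
    have hcT₀ : c T₀ = 0 := ell_eq_zero_imp hc0 hcc hca hci hT₀mem.1 hT₀0
    have hT₀pos : 0 < T₀ := by
      rcases hT₀mem.1.lt_or_eq with h | h
      · exact h
      · rw [← h] at hT₀0; rw [hT₀0] at hpos; exact absurd hpos (lt_irrefl 0)
    -- continuity of c from the left at T₀
    have hlim : Tendsto c (𝓝[Ico 0 T₀] T₀) (𝓝 0) := by
      have hlim' : Tendsto c (𝓝[Ico 0 T₀] T₀) (𝓝 (c T₀)) :=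
        (hcc T₀ hT₀mem.1).mono_left (nhdsWithin_mono _ (fun u hu => hu.1))
      rwa [hcT₀] at hlim'
    have hne : (𝓝[Ico 0 T₀] T₀).NeBot := by
      rw [← mem_closure_iff_nhdsWithin_neBot, closure_Ico hT₀pos.ne]
      exact ⟨hT₀mem.1, le_rfl⟩
    have hev : ∀ᶠ s in 𝓝[Ico 0 T₀] T₀, c s < ε :=
      hlim.eventually_lt_const hε
    obtain ⟨T, hT1, hT2⟩ := (hev.and self_mem_nhdsWithin).exists
    refine ⟨T, hT2.1, hT1.le, ?_⟩
    rcases (ell_nonneg hc0 hci T).lt_or_eq with h | h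
    · exact h
    · exfalso
      exact absurd (csInf_le (SS_bddBelow 0) (⟨hT2.1, h.ge⟩ : T ∈ SS c 0))
        (not_le.2 hT2.2)
  · -- ell is always positive; then c must get small since it is integrable
    push_neg at hA
    have hB : ∃ T, 0 ≤ T ∧ c T ≤ ε := by
      by_contra hcon
      push_neg at hcon
      obtain ⟨n, hn⟩ := exists_nat_gt (ell c 0 / ε)
      have hn' : (0:ℝ) ≤ n := Nat.cast_nonneg n
      have h1 : ∫ _u in (0:ℝ)..(n:ℝ), ε ≤ ∫ u in (0:ℝ)..(n:ℝ), c u := by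
        refine intervalIntegral.integral_mono_on hn' intervalIntegrable_const
          (interv hc0 hci 0 n le_rfl hn') (fun u hu => (hcon u hu.1).le)
      rw [intervalIntegral.integral_const, smul_eq_mul] at h1
      have h2 := ell_sub hc0 hci 0 n le_rfl hn'
      have h3 := ell_nonneg hc0 hci (n:ℝ)
      have h4 : ell c 0 / ε < n := hn
      rw [div_lt_iff₀ hε] at h4
      simp only [sub_zero] at h1
      linarith
    obtain ⟨T, hT0, hTε⟩ := hB
    refine ⟨T, hT0, hTε, ?_⟩
    rcases (ell_nonneg hc0 hci T).lt_or_eq with h | h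
    · exact h
    · exact absurd h.symm (hA T hT0)

lemma right_eps (u₀ : ℝ) {ε : ℝ} (hε : 0 < ε) :
    ∃ u₁ > u₀, GG c u₁ ≤ GG c u₀ + ε := by
  rcases le_or_gt (ell c 0) u₀ with hΛ | hΛ
  · refine ⟨u₀ + 1, lt_add_one u₀, ?_⟩
    rw [GG_flat_top hc0 hca hci (hΛ.trans (by linarith : u₀ ≤ u₀ + 1)),
      GG_flat_top hc0 hca hci hΛ]
    linarith
  · rcases lt_trichotomy u₀ 0 with h0 | h0 | h0
    · refine ⟨u₀ / 2, by linarith, ?_⟩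
      rw [GG_nonpos hc0 hcc hca hci (by linarith : u₀ / 2 ≤ 0),
        GG_nonpos hc0 hcc hca hci h0.le]
      linarith
    · -- u₀ = 0
      subst h0
      obtain ⟨T, hT0, hTε, hTpos⟩ := exists_small_c hc0 hcc hca hci hε hΛ
      refine ⟨ell c T, hTpos, ?_⟩
      rw [GG_ell hc0 hcc hca hci hT0, GG_nonpos hc0 hcc hca hci le_rfl]
      linarith
    · -- 0 < u₀ < ell c 0
      set τ₀ := tau c u₀ with hτ₀
      have hτ₀mem := tau_mem hc0 hci h0
      obtain ⟨δ, hδ, hδc⟩ := Metric.continuousWithinAt_iff.1 (hcc τ₀ hτ₀mem.1) ε hε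
      set B := tau c '' (Ioc u₀ (u₀ + 1)) with hB
      have hBne : B.Nonempty := ⟨tau c (u₀ + 1), mem_image_of_mem _ ⟨lt_add_one u₀, le_rfl⟩⟩
      have hBub : ∀ b ∈ B, b ≤ τ₀ := by
        rintro b ⟨u, hu, rfl⟩
        exact tau_anti hc0 hci h0 hu.1.le
      set β := sSup B with hβ
      have hβle : β ≤ τ₀ := csSup_le hBne hBub
      have hβ0 : 0 ≤ β := by
        refine le_trans (tau_mem hc0 hci (h0.trans (lt_add_one u₀))).1 ?_
        exact le_csSup ⟨τ₀, hBub⟩ (mem_image_of_mem _ ⟨lt_add_one u₀, le_rfl⟩)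
      have hβmem : β ∈ SS c u₀ := by
        refine ⟨hβ0, ?_⟩
        by_contra hcon
        push_neg at hcon
        set u := min (u₀ + 1) ((u₀ + ell c β) / 2) with hu
        have hu1 : u₀ < u := lt_min (lt_add_one u₀) (by linarith)
        have hu2 : u < ell c β := min_lt_of_right_lt (by linarith)
        have : tau c u ≤ β := le_csSup ⟨τ₀, hBub⟩
          (mem_image_of_mem _ ⟨hu1, min_le_left _ _⟩)
        have h5 : ell c β ≤ ell c (tau c u) := ell_antitone hc0 hci this
        have h6 : ell c (tau c u) ≤ u := (tau_mem hc0 hci (h0.trans hu1)).2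
        linarith
      have hβτ : β = τ₀ := le_antisymm hβle (tau_le hβmem)
      have hclaim3 : ∃ u₁ ∈ Ioc u₀ (u₀ + 1), τ₀ - δ < tau c u₁ := by
        by_contra hcon
        push_neg at hcon
        have : β ≤ τ₀ - δ := by
          refine csSup_le hBne ?_
          rintro b ⟨u, hu, rfl⟩
          exact hcon u hu
        rw [hβτ] at this
        linarith
      obtain ⟨u₁, hu₁, hτ₁⟩ := hclaim3
      have hτ₁le : tau c u₁ ≤ τ₀ := tau_anti hc0 hci h0 hu₁.1.le
      have hτ₁0 : (0:ℝ) ≤ tau c u₁ := (tau_mem hc0 hci (h0.trans hu₁.1)).1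
      have hdist : dist (tau c u₁) τ₀ < δ := by
        rw [Real.dist_eq, abs_lt]
        constructor <;> linarith
      have := hδc hτ₁0 hdist
      rw [Real.dist_eq, abs_lt] at this
      refine ⟨u₁, hu₁.1, ?_⟩
      rw [GG_eq hc0 hca hci (h0.trans hu₁.1), GG_eq hc0 hca hci h0]
      linarith [this.2]

lemma left_eps (u₀ : ℝ) {ε : ℝ} (hε : 0 < ε) :
    ∃ u₁ < u₀, GG c u₀ - ε ≤ GG c u₁ := by
  rcases le_or_gt u₀ 0 with h0 | h0
  · refine ⟨u₀ - 1, by linarith, ?_⟩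
    rw [GG_nonpos hc0 hcc hca hci h0, GG_nonpos hc0 hcc hca hci (by linarith)]
    linarith
  rcases lt_or_ge (ell c 0) u₀ with hΛ | hΛ
  · refine ⟨(ell c 0 + u₀) / 2, by linarith, ?_⟩
    rw [GG_flat_top hc0 hca hci (by linarith : ell c 0 ≤ (ell c 0 + u₀) / 2),
      GG_flat_top hc0 hca hci hΛ.le]
    linarith
  · -- 0 < u₀ ≤ ell c 0
    set τ₀ := tau c u₀ with hτ₀
    have hτ₀mem := tau_mem hc0 hci h0
    set J := tau c '' (Ico (u₀ / 2) u₀) with hJ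
    have hJne : J.Nonempty := ⟨tau c (u₀ / 2), mem_image_of_mem _ ⟨le_rfl, by linarith⟩⟩
    have hJbdd : BddBelow J := by
      refine ⟨0, ?_⟩
      rintro b ⟨v, hv, rfl⟩
      exact (tau_mem hc0 hci (lt_of_lt_of_le (half_pos h0) hv.1)).1
    have hJlb : ∀ b ∈ J, τ₀ ≤ b := by
      rintro b ⟨u, hu, rfl⟩
      exact tau_anti hc0 hci (lt_of_lt_of_le (half_pos h0) hu.1) hu.2.le
    set γ := sInf J with hγ
    have hγge : τ₀ ≤ γ := le_csInf hJne hJlb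
    have hγ0 : 0 ≤ γ := hτ₀mem.1.trans hγge
    have hγle : ell c γ ≤ u₀ := le_trans (ell_antitone hc0 hci hγge) hτ₀mem.2
    have hγge2 : u₀ ≤ ell c γ := by
      by_contra hcon
      push_neg at hcon
      set u := max (u₀ / 2) ((ell c γ + u₀) / 2) with hu
      have hu1 : u < u₀ := max_lt (by linarith) (by linarith)
      have hu2 : ell c γ < u := lt_max_of_lt_right (by linarith)
      have hu3 : u₀ / 2 ≤ u := le_max_left _ _
      have h4 : γ ≤ tau c u := csInf_le hJbdd (mem_image_of_mem _ ⟨hu3, hu1⟩)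
      have h5 : ell c (tau c u) ≤ ell c γ := ell_antitone hc0 hci h4
      have h6 : u ≤ ell c (tau c u) :=
        ell_tau_ge hc0 hci (by linarith : (0:ℝ) < u) (by linarith)
      linarith
    have hℓγ : ell c γ = u₀ := le_antisymm hγle hγge2
    have hℓτ₀ : ell c τ₀ = u₀ :=
      le_antisymm hτ₀mem.2 (le_trans hγge2 (ell_antitone hc0 hci hγge))
    have hcγ : c τ₀ = c γ :=
      flat' hc0 hcc hca hci hτ₀mem.1 hγge (by rw [hℓτ₀, hℓγ])
    obtain ⟨δ, hδ, hδc⟩ := Metric.continuousWithinAt_iff.1 (hcc γ hγ0) ε hε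
    have hclaim : ∃ u₁ ∈ Ico (u₀ / 2) u₀, tau c u₁ < γ + δ := by
      by_contra hcon
      push_neg at hcon
      have : γ + δ ≤ γ := by
        refine le_csInf hJne ?_
        rintro b ⟨u, hu, rfl⟩
        exact hcon u hu
      linarith
    obtain ⟨u₁, hu₁, hτ₁⟩ := hclaim
    have hu₁pos : (0:ℝ) < u₁ := by linarith [hu₁.1]
    have hτ₁ge : γ ≤ tau c u₁ := csInf_le hJbdd (mem_image_of_mem _ hu₁)
    have hτ₁0 : (0:ℝ) ≤ tau c u₁ := hγ0.trans hτ₁ge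
    have hdist : dist (tau c u₁) γ < δ := by
      rw [Real.dist_eq, abs_lt]
      constructor <;> linarith
    have := hδc hτ₁0 hdist
    rw [Real.dist_eq, abs_lt] at this
    refine ⟨u₁, hu₁.2, ?_⟩
    rw [GG_eq hc0 hca hci hu₁pos, GG_eq hc0 hca hci h0]
    rw [← hτ₀, hcγ]
    linarith [this.1]

lemma GG_cont : Continuous (GG c) := by
  rw [continuous_iff_continuousAt]
  intro u₀
  rw [continuousAt_iff_continuous_left'_right']
  constructor
  · refine tendsto_order.2 ⟨fun b hb => ?_, fun b hb => ?_⟩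
    · obtain ⟨u₁, hu₁, h⟩ := left_eps hc0 hcc hca hci u₀
        (by linarith : (0:ℝ) < (GG c u₀ - b) / 2)
      filter_upwards [Ioo_mem_nhdsLT_of_mem (⟨hu₁, le_rfl⟩ : u₀ ∈ Ioc u₁ u₀)]
        with u hu
      calc b < GG c u₁ := by linarith
        _ ≤ GG c u := GG_mono hc0 hca hu.1.le
    · filter_upwards [self_mem_nhdsWithin] with u hu
      exact lt_of_le_of_lt (GG_mono hc0 hca (le_of_lt hu)) hb
  · refine tendsto_order.2 ⟨fun b hb => ?_, fun b hb => ?_⟩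
    · filter_upwards [self_mem_nhdsWithin] with u hu
      exact lt_of_lt_of_le hb (GG_mono hc0 hca (le_of_lt hu))
    · obtain ⟨u₁, hu₁, h⟩ := right_eps hc0 hcc hca hci u₀
        (by linarith : (0:ℝ) < (b - GG c u₀) / 2)
      filter_upwards [Ioo_mem_nhdsGT_of_mem (⟨le_rfl, hu₁⟩ : u₀ ∈ Ico u₀ u₁)]
        with u hu
      calc GG c u ≤ GG c u₁ := GG_mono hc0 hca hu.2.le
        _ < b := by linarith

theorem onedim (h : ℝ → ℝ)
    (hh : ∀ t ∈ Ici (0:ℝ), HasDerivWithinAt h (-(c t)^2) (Ici 0) t) :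
    ∃ g : ℝ → ℝ, ConvexOn ℝ Set.univ g ∧ ContDiff ℝ 1 g ∧
      (∃ m : ℝ, ∀ y : ℝ, g m ≤ g y) ∧
      ∃ s : ℝ → ℝ,
        (∀ t ∈ Set.Ici (0:ℝ), HasDerivWithinAt s (-(deriv g (s t))) (Set.Ici 0) t) ∧
        ∀ t > (0:ℝ), h t = g (s t) := by
  set Λ := ell c 0 with hΛdef
  set g : ℝ → ℝ := fun y => h 0 + ∫ u in Λ..y, GG c u with hg
  have hGc := GG_cont hc0 hcc hca hci
  have hgderiv : ∀ y, HasDerivAt g (GG c y) y := by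
    intro y
    refine HasDerivAt.const_add _ ?_
    exact intervalIntegral.integral_hasDerivAt_right
      (hGc.intervalIntegrable Λ y)
      ⟨univ, Filter.univ_mem, (hGc.aestronglyMeasurable).restrict⟩
      hGc.continuousAt
  have hgd : deriv g = GG c := funext fun y => (hgderiv y).deriv
  have hgdiff : Differentiable ℝ g := fun y => (hgderiv y).differentiableAt
  refine ⟨g, ?_, ?_, ⟨0, ?_⟩, ell c, ?_, ?_⟩
  · refine MonotoneOn.convexOn_of_deriv convex_univ hgdiff.continuous.continuousOn
      hgdiff.differentiableOn ?_
    rw [interior_univ, hgd]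
    exact (GG_mono hc0 hca).monotoneOn _
  · rw [contDiff_one_iff_deriv]
    exact ⟨hgdiff, hgd ▸ hGc⟩
  · intro y
    have hsplit := intervalIntegral.integral_add_adjacent_intervals
      (hGc.intervalIntegrable (μ := MeasureTheory.volume) Λ 0)
      (hGc.intervalIntegrable (μ := MeasureTheory.volume) 0 y)
    have key : (0:ℝ) ≤ ∫ u in (0:ℝ)..y, GG c u := by
      rcases le_or_gt 0 y with hy | hy
      · exact intervalIntegral.integral_nonneg hy (fun u _ => GG_nonneg hc0 u)
      · have hzero : ∫ u in (0:ℝ)..y, GG c u = 0 := by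
          rw [intervalIntegral.integral_congr (g := fun _ => (0:ℝ)) ?_,
            intervalIntegral.integral_zero]
          intro u hu
          rw [uIcc_of_ge hy.le] at hu
          exact GG_nonpos hc0 hcc hca hci hu.2
        rw [hzero]
    have h2 : ∫ u in Λ..y, GG c u
        = (∫ u in Λ..(0:ℝ), GG c u) + ∫ u in (0:ℝ)..y, GG c u := hsplit.symm
    simp only [hg]
    rw [h2]
    linarith
  · intro t ht
    rw [hgd, GG_ell hc0 hcc hca hci ht]
    exact ell_hasDeriv hc0 hci hcc t ht
  · intro t ht
    have hF : ∀ y ∈ Ici (0:ℝ),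
        HasDerivWithinAt (fun z => g (ell c z) - h z) 0 (Ici 0) y := by
      intro y hy
      have h1 : HasDerivWithinAt (fun z => g (ell c z))
          (GG c (ell c y) * (-(c y))) (Ici 0) y :=
        (hgderiv (ell c y)).comp_hasDerivWithinAt y (ell_hasDeriv hc0 hci hcc y hy)
      have h2 := h1.sub (hh y hy)
      refine h2.congr_deriv ?_
      rw [GG_ell hc0 hcc hca hci hy]
      ring
    have hcont : ContinuousOn (fun z => g (ell c z) - h z) (Icc 0 t) :=
      fun y hy => ((hF y hy.1).continuousWithinAt).mono Icc_subset_Ici_self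
    have hconst := constant_of_has_deriv_right_zero hcont
      (fun y hy => (hF y hy.1).mono (Ici_subset_Ici.mpr hy.1))
    have heq := hconst t ⟨ht.le, le_rfl⟩
    have hg0 : g (ell c 0) = h 0 := by
      simp [hg, hΛdef]
    rw [hg0] at heq
    linarith

end main

section hilbert

variable {H : Type*} [NormedAddCommGroup H] [InnerProductSpace ℝ H] [CompleteSpace H]

lemma subgrad {f : H → ℝ} (hconv : ConvexOn ℝ Set.univ f)
    (hdiff : Differentiable ℝ f) (p q : H) :
    (inner ℝ (gradient f p) (q - p) : ℝ) ≤ f q - f p := by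
  set φ : ℝ → ℝ := fun τ => f ((AffineMap.lineMap p q : ℝ →ᵃ[ℝ] H) τ) with hφ
  have hφd : ∀ τ : ℝ, HasDerivAt φ
      (inner ℝ (gradient f (τ • (q - p) + p)) (q - p) : ℝ) τ := by
    intro τ
    have hcurve : HasDerivAt (fun τ : ℝ => τ • (q - p) + p) (q - p) τ := by
      simpa using ((hasDerivAt_id τ).smul_const (q - p)).add_const p
    have hf' : HasFDerivAt f
        ((InnerProductSpace.toDual ℝ H) (gradient f (τ • (q - p) + p)))
        (τ • (q - p) + p) := (hdiff _).hasGradientAt.hasFDerivAt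
    have h0 := hf'.comp_hasDerivAt τ hcurve
    have h1 : HasDerivAt (f ∘ fun τ : ℝ => τ • (q - p) + p)
        (inner ℝ (gradient f (τ • (q - p) + p)) (q - p) : ℝ) τ := by
      simpa [InnerProductSpace.toDual_apply_apply] using h0
    refine h1.congr_of_eventuallyEq ?_
    filter_upwards with σ
    simp [φ, Function.comp, AffineMap.lineMap_apply_module']
  have hφconv : ConvexOn ℝ Set.univ φ := by
    have h1 := hconv.comp_affineMap (AffineMap.lineMap p q : ℝ →ᵃ[ℝ] H)
    exact h1
  have hslope := hφconv.le_slope_of_hasDerivWithinAt_Ioi (mem_univ (0:ℝ))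
    (mem_univ (1:ℝ)) one_pos ((hφd 0).hasDerivWithinAt)
  rw [slope_def_field] at hslope
  have hφ0 : φ 0 = f p := by simp [φ, AffineMap.lineMap_apply_module']
  have hφ1 : φ 1 = f q := by simp [φ, AffineMap.lineMap_apply_module']
  rw [hφ0, hφ1] at hslope
  simpa using hslope

lemma grad_mono {f : H → ℝ} (hconv : ConvexOn ℝ Set.univ f)
    (hdiff : Differentiable ℝ f) (a b : H) :
    0 ≤ (inner ℝ (gradient f a - gradient f b) (a - b) : ℝ) := by
  have h1 := subgrad hconv hdiff a b
  have h2 := subgrad hconv hdiff b a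
  have e1 : (inner ℝ (gradient f a) (b - a) : ℝ) = - inner ℝ (gradient f a) (a - b) := by
    rw [← inner_neg_right, neg_sub]
  rw [e1] at h1
  rw [inner_sub_left]
  linarith

lemma flow_shift {f : H → ℝ} {x : ℝ → H}
    (hx : ∀ t ∈ Set.Ici (0:ℝ), HasDerivWithinAt x (-(gradient f (x t))) (Set.Ici 0) t)
    {ε : ℝ} (hε : 0 < ε) :
    ∀ t ∈ Set.Ici (0:ℝ), HasDerivWithinAt (fun s => x (s + ε))
      (-(gradient f (x (t + ε)))) (Set.Ici 0) t := by
  intro t ht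
  have ht' : (0:ℝ) ≤ t := ht
  have htε : t + ε ∈ Ici (0:ℝ) := by simp only [mem_Ici]; linarith
  have hshift : HasDerivWithinAt (fun s : ℝ => s + ε) 1 (Ici 0) t :=
    (hasDerivWithinAt_id t _).add_const ε
  have hmaps : MapsTo (fun s : ℝ => s + ε) (Ici 0) (Ici 0) := by
    intro s hs
    have : (0:ℝ) ≤ s := hs
    simp only [mem_Ici]; linarith
  have := (hx (t + ε) htε).scomp t hshift hmaps
  simpa [Function.comp_def] using this

lemma contract {f : H → ℝ} (hconv : ConvexOn ℝ Set.univ f) (hdiff : Differentiable ℝ f)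
    {x : ℝ → H}
    (hx : ∀ t ∈ Set.Ici (0:ℝ), HasDerivWithinAt x (-(gradient f (x t))) (Set.Ici 0) t)
    {ε : ℝ} (hε : 0 < ε) {a b : ℝ} (ha : a ∈ Ici (0:ℝ)) (hb : b ∈ Ici (0:ℝ)) (hab : a ≤ b) :
    ‖x (b + ε) - x b‖ ≤ ‖x (a + ε) - x a‖ := by
  set y : ℝ → H := fun t => x (t + ε) - x t with hy
  set D : ℝ → ℝ := fun t => (inner ℝ (y t) (y t) : ℝ) with hD
  have hyd : ∀ t ∈ Ici (0:ℝ), HasDerivWithinAt y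
      (-(gradient f (x (t + ε))) - -(gradient f (x t))) (Ici 0) t :=
    fun t ht => ((flow_shift hx hε t ht).sub (hx t ht))
  have hDd : ∀ t ∈ Ici (0:ℝ), HasDerivWithinAt D
      (2 * inner ℝ (-(gradient f (x (t + ε))) - -(gradient f (x t))) (y t)) (Ici 0) t := by
    intro t ht
    have h1 := HasDerivWithinAt.inner ℝ (hyd t ht) (hyd t ht)
    refine h1.congr_deriv ?_
    rw [real_inner_comm]
    ring
  have hanti : AntitoneOn D (Ici 0) := by
    refine antitoneOn_of_deriv_nonpos (convex_Ici 0) ?_ ?_ ?_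
    · exact fun t ht => (hDd t ht).continuousWithinAt
    · intro t ht
      rw [interior_Ici] at ht
      exact ((hDd t (mem_Ici.mpr (le_of_lt (mem_Ioi.mp ht)))).hasDerivAt
        (Ici_mem_nhds ht)).differentiableAt.differentiableWithinAt
    · intro t ht
      rw [interior_Ici] at ht
      rw [((hDd t (mem_Ici.mpr (le_of_lt (mem_Ioi.mp ht)))).hasDerivAt (Ici_mem_nhds ht)).deriv]
      have he : (-(gradient f (x (t + ε))) - -(gradient f (x t)))
          = -(gradient f (x (t + ε)) - gradient f (x t)) := by abel
      rw [he, inner_neg_left]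
      have hμ := grad_mono hconv hdiff (x (t + ε)) (x t)
      have hyt : y t = x (t + ε) - x t := rfl
      rw [← hyt] at hμ
      linarith
  have hD' := hanti ha hb hab
  have h1 : ‖y b‖ ^ 2 ≤ ‖y a‖ ^ 2 := by
    rw [← real_inner_self_eq_norm_sq, ← real_inner_self_eq_norm_sq]
    exact hD'
  have h2 : ‖y b‖ ≤ ‖y a‖ := by
    nlinarith [norm_nonneg (y b), norm_nonneg (y a)]
  exact h2

lemma c_anti {f : H → ℝ} (hconv : ConvexOn ℝ Set.univ f) (hdiff : Differentiable ℝ f)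
    {x : ℝ → H}
    (hx : ∀ t ∈ Set.Ici (0:ℝ), HasDerivWithinAt x (-(gradient f (x t))) (Set.Ici 0) t) :
    AntitoneOn (fun t => ‖gradient f (x t)‖) (Ici 0) := by
  have hslope : ∀ t ∈ Ici (0:ℝ), Tendsto (fun ε : ℝ => ‖ε⁻¹ • (x (t + ε) - x t)‖)
      (𝓝[>] (0:ℝ)) (𝓝 ‖gradient f (x t)‖) := by
    intro t ht
    have ht' : (0:ℝ) ≤ t := ht
    have h1 := (hasDerivWithinAt_iff_tendsto_slope).1 (hx t ht)
    have h2 : Tendsto (fun ε : ℝ => t + ε) (𝓝[>] (0:ℝ)) (𝓝[Ici 0 \ {t}] t) := by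
      rw [tendsto_nhdsWithin_iff]
      constructor
      · have h3 : Tendsto (fun ε : ℝ => t + ε) (𝓝 (0:ℝ)) (𝓝 t) := by
          have := (tendsto_const_nhds (x := t) (f := 𝓝 (0:ℝ))).add
            (tendsto_id (x := 𝓝 (0:ℝ)))
          simpa using this
        exact h3.mono_left nhdsWithin_le_nhds
      · filter_upwards [self_mem_nhdsWithin] with ε (hε : (0:ℝ) < ε)
        refine ⟨?_, ?_⟩
        · simp only [mem_Ici]; linarith
        · simp only [mem_singleton_iff]
          exact (by linarith : t < t + ε).ne'
    have h3 := h1.comp h2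
    have h4 : Tendsto (fun ε : ℝ => ε⁻¹ • (x (t + ε) - x t)) (𝓝[>] (0:ℝ))
        (𝓝 (-(gradient f (x t)))) := by
      refine h3.congr (fun ε => ?_)
      simp [slope, vsub_eq_sub, add_sub_cancel_left, Function.comp]
    have h5 := h4.norm
    simpa using h5
  intro a ha b hb hab
  refine le_of_tendsto_of_tendsto (hslope b hb) (hslope a ha) ?_
  filter_upwards [self_mem_nhdsWithin] with ε (hε : (0:ℝ) < ε)
  simp only [norm_smul]
  exact mul_le_mul_of_nonneg_left (contract hconv hdiff hx hε ha hb hab) (norm_nonneg _)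

end hilbert

end GFRed

/-- Let `f` be a convex differentiable function on a real Hilbert space
with Lipschitz gradient and let `x` be a gradient flow of `f` of finite length
(`∫₀^∞ ‖x'(t)‖ dt < ∞`, where `x'(t) = −∇f(x(t))`). Then there exist a convex C¹
function `g : ℝ → ℝ` attaining its minimum and a gradient flow `s` of `g` such that
`f(x(t)) = g(s(t))` for all `t > 0`. -/
theorem gradient_flow_reduction_to_one_dim
    (H : Type*) [NormedAddCommGroup H] [InnerProductSpace ℝ H] [CompleteSpace H]
    (f : H → ℝ) (hconv : ConvexOn ℝ Set.univ f) (hdiff : Differentiable ℝ f)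
    (L : NNReal) (hlip : LipschitzWith L (gradient f))
    (x : ℝ → H)
    (hx : ∀ t ∈ Set.Ici (0:ℝ),
      HasDerivWithinAt x (-(gradient f (x t))) (Set.Ici 0) t)
    (hlen : MeasureTheory.IntegrableOn (fun t => ‖gradient f (x t)‖) (Set.Ioi 0)) :
    ∃ g : ℝ → ℝ, ConvexOn ℝ Set.univ g ∧ ContDiff ℝ 1 g ∧
      (∃ m : ℝ, ∀ y : ℝ, g m ≤ g y) ∧
      ∃ s : ℝ → ℝ,
        (∀ t ∈ Set.Ici (0:ℝ), HasDerivWithinAt s (-(deriv g (s t))) (Set.Ici 0) t) ∧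
        ∀ t > (0:ℝ), f (x t) = g (s t) := by
  have hc0 : ∀ t, (0:ℝ) ≤ ‖gradient f (x t)‖ := fun t => norm_nonneg _
  have hxc : ContinuousOn x (Ici 0) := fun t ht => (hx t ht).continuousWithinAt
  have hcc : ContinuousOn (fun t => ‖gradient f (x t)‖) (Ici 0) :=
    (hlip.continuous.comp_continuousOn hxc).norm
  have hca := GFRed.c_anti hconv hdiff hx
  have hh : ∀ t ∈ Ici (0:ℝ),
      HasDerivWithinAt (fun t => f (x t)) (-(‖gradient f (x t)‖)^2) (Ici 0) t := by
    intro t ht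
    have hf' : HasFDerivAt f
        ((InnerProductSpace.toDual ℝ H) (gradient f (x t))) (x t) :=
      (hdiff (x t)).hasGradientAt.hasFDerivAt
    have h1 := hf'.comp_hasDerivWithinAt t (hx t ht)
    refine h1.congr_deriv ?_
    rw [InnerProductSpace.toDual_apply_apply, inner_neg_right, real_inner_self_eq_norm_sq]
  obtain ⟨g, h1, h2, h3, s, h4, h5⟩ :=
    GFRed.onedim hc0 hcc hca hlen (fun t => f (x t)) hh
  exact ⟨g, h1, h2, h3, s, h4, h5⟩
end

section
/- Let f : ℝ^d → ℝ be a convex differentiable function whose gradient ∇f is L-Lipschitz continuous (L > 0) with respect to the Euclidean norm, let x* ∈ ℝ^d satisfy f(x*) = inf_{y ∈ ℝ^d} f(y), and let (x_n)_{n≥0} be defined by the gradient descent iteration x_{n+1} = x_n − η·∇f(x_n) with step size 0 < η < 2/L. Then η·Σ_{n=0}^∞ (f(x_n) − f(x*)) ≤ ‖x_0 − x*‖²/2 + (η/(2·(1 − Lη/2)))·(f(x_0) − f(x*)). -/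
open Filter MeasureTheory Set

section Aux

variable {d : ℕ}

private lemma fderiv_apply_eq_inner (f : EuclideanSpace ℝ (Fin d) → ℝ)
    (hdiff : Differentiable ℝ f) (x v : EuclideanSpace ℝ (Fin d)) :
    fderiv ℝ f x v = inner ℝ (gradient f x) v := by
  rw [(hdiff x).hasGradientAt.hasFDerivAt.fderiv]
  exact InnerProductSpace.toDual_apply_apply ..

private lemma hasDerivAt_line (f : EuclideanSpace ℝ (Fin d) → ℝ)
    (hdiff : Differentiable ℝ f) (x u : EuclideanSpace ℝ (Fin d)) (t : ℝ) :
    HasDerivAt (fun s : ℝ => f (x + s • u))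
      (inner ℝ (gradient f (x + t • u)) u : ℝ) t := by
  have h2 : HasDerivAt (fun s : ℝ => x + s • u) u t := by
    simpa using ((hasDerivAt_id t).smul_const u).const_add x
  have h1 : HasFDerivAt f (fderiv ℝ f (x + t • u)) (x + t • u) := (hdiff _).hasFDerivAt
  have := h1.comp_hasDerivAt t h2
  rw [fderiv_apply_eq_inner f hdiff] at this
  exact this

/-- Convexity gradient inequality. -/
private lemma grad_le_sub (f : EuclideanSpace ℝ (Fin d) → ℝ)
    (hconv : ConvexOn ℝ Set.univ f) (hdiff : Differentiable ℝ f)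
    (x y : EuclideanSpace ℝ (Fin d)) :
    (inner ℝ (gradient f x) (y - x) : ℝ) ≤ f y - f x := by
  set g : ℝ → ℝ := fun t => f (x + t • (y - x)) with hgdef
  have hg : ConvexOn ℝ Set.univ g := by
    have h := hconv.comp_affineMap (AffineMap.lineMap x y : ℝ →ᵃ[ℝ] EuclideanSpace ℝ (Fin d))
    have : ((AffineMap.lineMap x y : ℝ →ᵃ[ℝ] EuclideanSpace ℝ (Fin d)) ⁻¹' Set.univ) = Set.univ :=
      Set.preimage_univ
    rw [this] at h
    have heq : g = f ∘ (AffineMap.lineMap x y : ℝ →ᵃ[ℝ] EuclideanSpace ℝ (Fin d)) := by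
      funext t
      simp only [hgdef, Function.comp_apply, AffineMap.lineMap_apply, vsub_eq_sub, vadd_eq_add]
      congr 1
      abel
    rw [heq]
    exact h
  have hd : HasDerivAt g (inner ℝ (gradient f x) (y - x) : ℝ) 0 := by
    have := hasDerivAt_line f hdiff x (y - x) 0
    simpa using this
  have hslope := hg.le_slope_of_hasDerivAt (Set.mem_univ (0:ℝ)) (Set.mem_univ (1:ℝ))
    one_pos hd
  have hg1 : g 1 = f y := by
    simp only [hgdef, one_smul]
    congr 1
    abel
  have hg0 : g 0 = f x := by simp [hgdef]
  have hsl : slope g 0 1 = f y - f x := by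
    simp [slope_def_field, hg0, hg1]
  rw [hsl] at hslope
  linarith

/-- Descent lemma: quadratic upper bound from Lipschitz gradient. -/
private lemma descent_lemma (f : EuclideanSpace ℝ (Fin d) → ℝ)
    (hdiff : Differentiable ℝ f) (L : ℝ) (hL : 0 < L)
    (hlip : LipschitzWith L.toNNReal (gradient f))
    (x u : EuclideanSpace ℝ (Fin d)) :
    f (x + u) ≤ f x + (inner ℝ (gradient f x) u : ℝ) + L / 2 * ‖u‖ ^ 2 := by
  have hLcoe : (L.toNNReal : ℝ) = L := Real.coe_toNNReal L hL.le
  set g' : ℝ → ℝ := fun t => inner ℝ (gradient f (x + t • u)) u with hg'def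
  have hcont : Continuous g' := by
    apply Continuous.inner
    · exact hlip.continuous.comp (by continuity)
    · exact continuous_const
  have hftc : ∫ t in (0:ℝ)..1, g' t = f (x + u) - f x := by
    have := intervalIntegral.integral_eq_sub_of_hasDerivAt
      (f := fun s : ℝ => f (x + s • u)) (f' := g')
      (fun t _ => hasDerivAt_line f hdiff x u t)
      (hcont.intervalIntegrable 0 1)
    simpa using this
  have hbound : ∀ t ∈ Set.Icc (0:ℝ) 1,
      g' t ≤ inner ℝ (gradient f x) u + L * t * ‖u‖ ^ 2 := by
    intro t ht
    have h1 : g' t - (inner ℝ (gradient f x) u : ℝ)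
        = inner ℝ (gradient f (x + t • u) - gradient f x) u := by
      rw [inner_sub_left]
    have h2 : ‖gradient f (x + t • u) - gradient f x‖ ≤ L * (t * ‖u‖) := by
      have := hlip.dist_le_mul (x + t • u) x
      rw [dist_eq_norm, dist_eq_norm] at this
      calc ‖gradient f (x + t • u) - gradient f x‖ ≤ L.toNNReal * ‖x + t • u - x‖ := this
        _ = L * (t * ‖u‖) := by
            rw [hLcoe, add_sub_cancel_left, norm_smul, Real.norm_eq_abs,
              abs_of_nonneg ht.1]
    have h3 : (inner ℝ (gradient f (x + t • u) - gradient f x) u : ℝ)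
        ≤ ‖gradient f (x + t • u) - gradient f x‖ * ‖u‖ :=
      real_inner_le_norm _ _
    have h4 : ‖gradient f (x + t • u) - gradient f x‖ * ‖u‖ ≤ L * (t * ‖u‖) * ‖u‖ :=
      mul_le_mul_of_nonneg_right h2 (norm_nonneg u)
    nlinarith [h1, h3, h4]
  have hint_le : ∫ t in (0:ℝ)..1, g' t
      ≤ ∫ t in (0:ℝ)..1, ((inner ℝ (gradient f x) u : ℝ) + L * t * ‖u‖ ^ 2) := by
    apply intervalIntegral.integral_mono_on one_pos.le (hcont.intervalIntegrable 0 1)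
    · exact ((continuous_const.add ((continuous_const.mul continuous_id).mul
        continuous_const)).intervalIntegrable 0 1)
    · exact hbound
  have hrhs : ∫ t in (0:ℝ)..1, ((inner ℝ (gradient f x) u : ℝ) + L * t * ‖u‖ ^ 2)
      = inner ℝ (gradient f x) u + L / 2 * ‖u‖ ^ 2 := by
    have h1 : ∫ t in (0:ℝ)..1, ((inner ℝ (gradient f x) u : ℝ) + L * t * ‖u‖ ^ 2)
        = (∫ _t in (0:ℝ)..1, (inner ℝ (gradient f x) u : ℝ))
          + ∫ t in (0:ℝ)..1, L * t * ‖u‖ ^ 2 := by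
      apply intervalIntegral.integral_add
      · exact intervalIntegrable_const
      · exact ((continuous_const.mul continuous_id).mul
          continuous_const).intervalIntegrable 0 1
    rw [h1]
    have h2 : ∫ t in (0:ℝ)..1, L * t * ‖u‖ ^ 2 = L / 2 * ‖u‖ ^ 2 := by
      have : (fun t : ℝ => L * t * ‖u‖ ^ 2) = fun t : ℝ => (L * ‖u‖ ^ 2) * t := by
        funext t; ring
      rw [this, intervalIntegral.integral_const_mul, integral_id]
      ring
    rw [h2]
    simp
  linarith [hftc ▸ hint_le, hrhs ▸ hint_le]

end Aux

/-- Summability of the excess objective along gradient descent. For a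
convex `f : ℝ^d → ℝ` with `L`-Lipschitz gradient, minimizer `x*`, step size
`0 < η < 2/L` and iterates `x_{n+1} = x_n − η·∇f(x_n)`, every partial sum satisfies
`η·Σ_{n<N} (f(x_n) − f(x*)) ≤ ‖x_0 − x*‖²/2 + (η/(2(1 − Lη/2)))·(f(x_0) − f(x*))`,
i.e. the full series obeys this bound. -/
theorem gradient_descent_summable_excess
    (d : ℕ) (f : EuclideanSpace ℝ (Fin d) → ℝ)
    (hconv : ConvexOn ℝ Set.univ f) (hdiff : Differentiable ℝ f)
    (L : ℝ) (hL : 0 < L) (hlip : LipschitzWith L.toNNReal (gradient f))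
    (xstar : EuclideanSpace ℝ (Fin d)) (hmin : ∀ y, f xstar ≤ f y)
    (η : ℝ) (hη0 : 0 < η) (hη : η < 2 / L)
    (x : ℕ → EuclideanSpace ℝ (Fin d))
    (hx : ∀ n : ℕ, x (n+1) = x n - η • gradient f (x n)) :
    ∀ N : ℕ, η * ∑ n ∈ Finset.range N, (f (x n) - f xstar) ≤
      ‖x 0 - xstar‖ ^ 2 / 2 + (η / (2 * (1 - L * η / 2))) * (f (x 0) - f xstar) := by
  intro N
  set C : ℝ := 1 - L * η / 2 with hCdef
  have hC : 0 < C := by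
    have h2 : η * L < 2 := (lt_div_iff₀ hL).mp hη
    have h3 : L * η < 2 := by rw [mul_comm]; exact h2
    simp only [hCdef]
    linarith
  set g : ℕ → EuclideanSpace ℝ (Fin d) := fun n => gradient f (x n) with hgdef
  -- descent step
  have hdesc : ∀ n, f (x (n+1)) ≤ f (x n) - η * C * ‖g n‖ ^ 2 := by
    intro n
    have h := descent_lemma f hdiff L hL hlip (x n) (-(η • g n))
    have hx' : x (n+1) = x n + -(η • g n) := by rw [hx n, sub_eq_add_neg]
    rw [← hx'] at h
    have hinner : (inner ℝ (g n) (-(η • g n)) : ℝ) = -(η * ‖g n‖ ^ 2) := by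
      rw [inner_neg_right, real_inner_smul_right, real_inner_self_eq_norm_sq]
    have hnorm : ‖-(η • g n)‖ ^ 2 = η ^ 2 * ‖g n‖ ^ 2 := by
      rw [norm_neg, norm_smul, Real.norm_eq_abs, abs_of_pos hη0, mul_pow]
    rw [hinner, hnorm] at h
    have heq : f (x n) - η * C * ‖g n‖ ^ 2
        = f (x n) + -(η * ‖g n‖ ^ 2) + L / 2 * (η ^ 2 * ‖g n‖ ^ 2) := by
      rw [hCdef]; ring
    rw [heq]
    exact h
  -- convexity step
  have hconvstep : ∀ n, f (x n) - f xstar ≤ (inner ℝ (g n) (x n - xstar) : ℝ) := by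
    intro n
    have h := grad_le_sub f hconv hdiff (x n) xstar
    have : (inner ℝ (g n) (xstar - x n) : ℝ) = -(inner ℝ (g n) (x n - xstar) : ℝ) := by
      rw [← inner_neg_right, neg_sub]
    rw [this] at h
    linarith
  -- norm identity
  have hnormid : ∀ n, ‖x (n+1) - xstar‖ ^ 2
      = ‖x n - xstar‖ ^ 2 - 2 * η * (inner ℝ (g n) (x n - xstar) : ℝ) + η ^ 2 * ‖g n‖ ^ 2 := by
    intro n
    have hx' : x (n+1) - xstar = (x n - xstar) - η • g n := by
      rw [hx n]; abel
    rw [hx', norm_sub_sq_real, real_inner_smul_right, norm_smul, Real.norm_eq_abs,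
      abs_of_pos hη0, mul_pow, real_inner_comm]
    ring
  -- per-step bound
  have hstep : ∀ n, η * (f (x n) - f xstar)
      ≤ (‖x n - xstar‖ ^ 2 - ‖x (n+1) - xstar‖ ^ 2) / 2 + η ^ 2 / 2 * ‖g n‖ ^ 2 := by
    intro n
    have h1 := hconvstep n
    have h2 := hnormid n
    nlinarith [h1, h2]
  -- sum of squared gradient norms
  set S : ℝ := ∑ n ∈ Finset.range N, ‖g n‖ ^ 2 with hSdef
  have hSnonneg : 0 ≤ S := Finset.sum_nonneg fun n _ => by positivity
  have hS : η * C * S ≤ f (x 0) - f xstar := by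
    have h1 : ∑ n ∈ Finset.range N, (η * C * ‖g n‖ ^ 2)
        ≤ ∑ n ∈ Finset.range N, (f (x n) - f (x (n+1))) := by
      apply Finset.sum_le_sum
      intro n _
      linarith [hdesc n]
    rw [Finset.sum_range_sub' (fun n => f (x n)) N] at h1
    rw [← Finset.mul_sum] at h1
    have := hmin (x N)
    simp only [hSdef]
    linarith
  -- main sum
  have hmain : ∑ n ∈ Finset.range N, (η * (f (x n) - f xstar))
      ≤ (‖x 0 - xstar‖ ^ 2 - ‖x N - xstar‖ ^ 2) / 2 + η ^ 2 / 2 * S := by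
    have h1 : ∑ n ∈ Finset.range N, (η * (f (x n) - f xstar))
        ≤ ∑ n ∈ Finset.range N,
          ((‖x n - xstar‖ ^ 2 - ‖x (n+1) - xstar‖ ^ 2) / 2 + η ^ 2 / 2 * ‖g n‖ ^ 2) := by
      apply Finset.sum_le_sum
      intro n _
      exact hstep n
    rw [Finset.sum_add_distrib] at h1
    have h2 : ∑ n ∈ Finset.range N, (‖x n - xstar‖ ^ 2 - ‖x (n+1) - xstar‖ ^ 2) / 2
        = (‖x 0 - xstar‖ ^ 2 - ‖x N - xstar‖ ^ 2) / 2 := by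
      rw [← Finset.sum_div, Finset.sum_range_sub' (fun n => ‖x n - xstar‖ ^ 2) N]
    have h3 : ∑ n ∈ Finset.range N, η ^ 2 / 2 * ‖g n‖ ^ 2 = η ^ 2 / 2 * S := by
      rw [hSdef, Finset.mul_sum]
    rw [h2, h3] at h1
    exact h1
  rw [← Finset.mul_sum] at hmain
  have hxN : 0 ≤ ‖x N - xstar‖ ^ 2 := by positivity
  -- combine: η² / 2 * S ≤ η/(2C) * (f x0 - f*)
  have hfinal : η ^ 2 / 2 * S ≤ η / (2 * C) * (f (x 0) - f xstar) := by
    have hCne : C ≠ 0 := ne_of_gt hC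
    have hpos : (0:ℝ) < η / (2 * C) := by positivity
    have h := mul_le_mul_of_nonneg_left hS hpos.le
    have heq : η / (2 * C) * (η * C * S) = η ^ 2 / 2 * S := by
      field_simp
    rw [heq] at h
    exact h
  calc η * ∑ n ∈ Finset.range N, (f (x n) - f xstar)
      ≤ (‖x 0 - xstar‖ ^ 2 - ‖x N - xstar‖ ^ 2) / 2 + η ^ 2 / 2 * S := hmain
    _ ≤ ‖x 0 - xstar‖ ^ 2 / 2 + η / (2 * C) * (f (x 0) - f xstar) := by linarith [hfinal, hxN]
    _ = ‖x 0 - xstar‖ ^ 2 / 2 + (η / (2 * (1 - L * η / 2))) * (f (x 0) - f xstar) := by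
        rw [hCdef]
end

section
/- Let H be a real Hilbert space, f : H → ℝ a convex differentiable function, and x* ∈ H a point with f(x*) = inf_{y ∈ H} f(y). Let α > 3 and let x : (0,∞) → H be a twice differentiable solution of the heavy ball ODE x''(t) = −(α/t)·x'(t) − ∇f(x(t)) with initial behavior lim_{t→0⁺} x(t) = x₀ and lim_{t→0⁺} t·x'(t) = 0. Then ∫₀^∞ t·(f(x(t)) − f(x*)) dt ≤ (α−1)²·‖x₀ − x*‖² / (2·(α−3)). -/
open Filter MeasureTheory Set

lemma convex_grad_ineq {H : Type*} [NormedAddCommGroup H] [InnerProductSpace ℝ H] [CompleteSpace H]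
    {f : H → ℝ} (hconv : ConvexOn ℝ Set.univ f) (hdiff : Differentiable ℝ f)
    (a b : H) : f a + (inner ℝ (gradient f a) (b - a) : ℝ) ≤ f b := by
  have hψ : HasDerivAt (fun s : ℝ => a + s • (b - a)) (b - a) 0 := by
    simpa using ((hasDerivAt_id (0:ℝ)).smul_const (b - a)).const_add a
  have hφ : HasDerivAt (fun s : ℝ => f (a + s • (b - a))) (fderiv ℝ f a (b - a)) 0 := by
    have h := (hdiff (a + (0:ℝ) • (b - a))).hasFDerivAt.comp_hasDerivAt 0 hψ
    simp only [zero_smul, add_zero] at h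
    exact h
  have hcφ : ConvexOn ℝ Set.univ (fun s : ℝ => f (a + s • (b - a))) := by
    have h := hconv.comp_affineMap (AffineMap.lineMap a b : ℝ →ᵃ[ℝ] H)
    rw [Set.preimage_univ] at h
    rw [show (fun s : ℝ => f (a + s • (b - a))) = f ∘ ⇑(AffineMap.lineMap a b) from ?_]
    · exact h
    funext s
    simp only [Function.comp_apply, AffineMap.lineMap_apply_module]
    congr 1
    module
  have hs := hcφ.le_slope_of_hasDerivAt (Set.mem_univ (0:ℝ)) (Set.mem_univ (1:ℝ)) one_pos hφ
  rw [slope_def_field] at hs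
  simp only [one_smul, zero_smul, add_zero, sub_zero, div_one] at hs
  have hab : a + (b - a) = b := by abel
  rw [hab] at hs
  have hgrad : (inner ℝ (gradient f a) (b - a) : ℝ) = fderiv ℝ f a (b - a) := by
    simp [gradient, InnerProductSpace.toDual_symm_apply]
  linarith

/-- Integrability of `t·(f(x(t)) − inf f)` along the heavy ball ODE
`x'' = −(α/t)·x' − ∇f(x)` with `α > 3` on a real Hilbert space, for convex
differentiable `f` with minimizer `x*`, initial position `x(t) → x₀` and
`t·x'(t) → 0` as `t → 0⁺`:
`∫₀^∞ t·(f(x(t)) − f(x*)) dt ≤ (α−1)²·‖x₀ − x*‖²/(2(α−3))`. -/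
theorem heavy_ball_weighted_excess_integrable
    (H : Type*) [NormedAddCommGroup H] [InnerProductSpace ℝ H] [CompleteSpace H]
    (f : H → ℝ) (hconv : ConvexOn ℝ Set.univ f) (hdiff : Differentiable ℝ f)
    (xstar : H) (hmin : ∀ y, f xstar ≤ f y)
    (α : ℝ) (hα : 3 < α)
    (x v : ℝ → H)
    (hx : ∀ t > (0:ℝ), HasDerivAt x (v t) t)
    (hv : ∀ t > (0:ℝ), HasDerivAt v (-(α / t) • v t - gradient f (x t)) t)
    (x₀ : H)
    (hx0 : Filter.Tendsto x (nhdsWithin 0 (Set.Ioi 0)) (nhds x₀))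
    (hv0 : Filter.Tendsto (fun t : ℝ => t • v t) (nhdsWithin 0 (Set.Ioi 0)) (nhds 0)) :
    ∫⁻ t in Set.Ioi (0:ℝ), ENNReal.ofReal (t * (f (x t) - f xstar)) ≤
      ENNReal.ofReal ((α - 1) ^ 2 * ‖x₀ - xstar‖ ^ 2 / (2 * (α - 3))) := by
  have hα1 : (0:ℝ) < α - 1 := by linarith
  have hα3 : (0:ℝ) < α - 3 := by linarith
  have hα1' : α - 1 ≠ 0 := ne_of_gt hα1
  set g : ℝ → ℝ := fun t => f (x t) - f xstar with hg_def
  set G : ℝ → H := fun t => gradient f (x t) with hG_def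
  set u : ℝ → H := fun t => (x t - xstar) + ((α-1)⁻¹ * t) • v t with hu_def
  set E : ℝ → ℝ := fun t => (2/(α-1)) * (t^2 * g t) + (α-1) * (inner ℝ (u t) (u t) : ℝ)
    with hE_def
  set c : ℝ := 2*(α-3)/(α-1) with hc_def
  have hc : 0 < c := by positivity
  have hgnn : ∀ t, 0 ≤ g t := fun t => sub_nonneg.2 (hmin _)
  -- derivative of f ∘ x
  have hfx : ∀ t, 0 < t → HasDerivAt (fun s => f (x s)) ((inner ℝ (G t) (v t) : ℝ)) t := by
    intro t ht
    have h1 := (hdiff (x t)).hasFDerivAt.comp_hasDerivAt t (hx t ht)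
    have h2 : (inner ℝ (G t) (v t) : ℝ) = fderiv ℝ f (x t) (v t) := by
      simp [hG_def, gradient, InnerProductSpace.toDual_symm_apply]
    rw [h2]
    exact h1
  -- derivative of u
  have hu' : ∀ t, 0 < t → HasDerivAt u (-(((α-1)⁻¹ * t)) • G t) t := by
    intro t ht
    have ht' : t ≠ 0 := ne_of_gt ht
    have h1 : HasDerivAt (fun s => x s - xstar) (v t) t := (hx t ht).sub_const xstar
    have h2 : HasDerivAt (fun s : ℝ => (α-1)⁻¹ * s) ((α-1)⁻¹) t := by
      simpa using (hasDerivAt_id t).const_mul ((α-1)⁻¹)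
    have h3 := h2.smul (hv t ht)
    have h4 := h1.add h3
    convert h4 using 1
    · rfl
    simp only [smul_sub, smul_smul, neg_smul, smul_neg]
    match_scalars <;> (field_simp; try ring)
  -- derivative of E
  have hEt : ∀ t, 0 < t → HasDerivAt E
      (2/(α-1) * ((2*t) * g t + t^2 * (inner ℝ (G t) (v t) : ℝ))
        + (α-1) * ((inner ℝ (u t) (-(((α-1)⁻¹ * t)) • G t) : ℝ)
          + (inner ℝ (-(((α-1)⁻¹ * t)) • G t) (u t) : ℝ))) t := by
    intro t ht
    have hgt : HasDerivAt g ((inner ℝ (G t) (v t) : ℝ)) t := (hfx t ht).sub_const _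
    have hsq : HasDerivAt (fun s : ℝ => s^2) (2*t) t := by
      simpa [mul_comm] using hasDerivAt_pow 2 t
    have h1 := (hsq.mul hgt).const_mul (2/(α-1))
    have h2 := ((hu' t ht).inner ℝ (hu' t ht)).const_mul (α-1)
    exact h1.add h2
  -- derivative bound
  have hDle : ∀ t, 0 < t →
      2/(α-1) * ((2*t) * g t + t^2 * (inner ℝ (G t) (v t) : ℝ))
        + (α-1) * ((inner ℝ (u t) (-(((α-1)⁻¹ * t)) • G t) : ℝ)
          + (inner ℝ (-(((α-1)⁻¹ * t)) • G t) (u t) : ℝ))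
        + c * (t * g t) ≤ 0 := by
    intro t ht
    have hconvkey : g t ≤ (inner ℝ (G t) (x t - xstar) : ℝ) := by
      have h := convex_grad_ineq hconv hdiff (x t) xstar
      have : (inner ℝ (G t) (xstar - x t) : ℝ) = -(inner ℝ (G t) (x t - xstar) : ℝ) := by
        rw [← inner_neg_right]; congr 1; abel
      rw [this] at h
      simp only [hg_def]
      linarith
    have hinner : (inner ℝ (u t) (-(((α-1)⁻¹ * t)) • G t) : ℝ)
        + (inner ℝ (-(((α-1)⁻¹ * t)) • G t) (u t) : ℝ)
        = 2 * (-((α-1)⁻¹ * t) * ((inner ℝ (G t) (x t - xstar) : ℝ)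
            + ((α-1)⁻¹ * t) * (inner ℝ (G t) (v t) : ℝ))) := by
      simp only [hu_def, inner_add_left, inner_add_right, real_inner_smul_left,
        real_inner_smul_right]
      rw [real_inner_comm (G t) (x t - xstar), real_inner_comm (G t) (v t)]
      ring
    rw [hinner]
    set A := g t
    set B := (inner ℝ (G t) (v t) : ℝ)
    set C := (inner ℝ (G t) (x t - xstar) : ℝ)
    have hACB : 2/(α-1) * ((2*t) * A + t^2 * B)
        + (α-1) * (2 * (-((α-1)⁻¹ * t) * (C + ((α-1)⁻¹ * t) * B)))
        + c * (t * A)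
        = (2*t/(α-1)) * ((α-1)*A - (α-1)*C) := by
      rw [hc_def]; field_simp; ring
    rw [hACB]
    have h1 : (α-1)*A - (α-1)*C ≤ 0 := by nlinarith
    have h2 : 0 ≤ 2*t/(α-1) := by positivity
    exact mul_nonpos_of_nonneg_of_nonpos h2 h1
  -- continuity of the weight
  have hwc : ∀ t : ℝ, 0 < t → ContinuousAt (fun s => s * g s) t := by
    intro t ht
    exact continuousAt_id.mul
      (((hdiff.continuous.continuousAt).comp (hx t ht).continuousAt).sub continuousAt_const)
  have hInt : ∀ a b : ℝ, 0 < a → 0 < b → IntervalIntegrable (fun s => s * g s) volume a b := by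
    intro a b ha hb
    apply ContinuousOn.intervalIntegrable
    intro t htt
    have ht0 : 0 < t := lt_of_lt_of_le (lt_min ha hb) htt.1
    exact (hwc t ht0).continuousWithinAt
  -- derivative of the running integral
  set W : ℝ → ℝ := fun r => ∫ s in (1:ℝ)..r, c * (s * g s) with hW_def
  have hIntc : ∀ a b : ℝ, 0 < a → 0 < b →
      IntervalIntegrable (fun s => c * (s * g s)) volume a b := by
    intro a b ha hb
    exact (hInt a b ha hb).const_mul c
  have hWt : ∀ t, 0 < t → HasDerivAt W (c * (t * g t)) t := by
    intro t ht
    refine intervalIntegral.integral_hasDerivAt_right (hIntc 1 t one_pos ht) ?_ ?_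
    · exact ContinuousAt.stronglyMeasurableAtFilter isOpen_Ioi
        (fun s hs => (continuousAt_const.mul (hwc s hs))) t ht
    · exact continuousAt_const.mul (hwc t ht)
  -- F = E + W is antitone on Ioi 0
  set F : ℝ → ℝ := fun t => E t + W t with hF_def
  have hFd : ∀ t, 0 < t → HasDerivAt F
      (2/(α-1) * ((2*t) * g t + t^2 * (inner ℝ (G t) (v t) : ℝ))
        + (α-1) * ((inner ℝ (u t) (-(((α-1)⁻¹ * t)) • G t) : ℝ)
          + (inner ℝ (-(((α-1)⁻¹ * t)) • G t) (u t) : ℝ)) + c * (t * g t)) t := by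
    intro t ht
    exact (hEt t ht).add (hWt t ht)
  have hFanti : AntitoneOn F (Ioi 0) := by
    apply antitoneOn_of_deriv_nonpos (convex_Ioi 0)
    · intro t ht
      exact (hFd t ht).continuousAt.continuousWithinAt
    · intro t ht
      rw [interior_Ioi] at ht
      exact ((hFd t ht).differentiableAt.differentiableWithinAt)
    · intro t ht
      rw [interior_Ioi] at ht
      rw [(hFd t ht).deriv]
      exact hDle t ht
  have hEnn : ∀ t, 0 < t → 0 ≤ E t := by
    intro t ht
    have h1 : (0:ℝ) ≤ inner ℝ (u t) (u t) := real_inner_self_nonneg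
    have h2 : (0:ℝ) ≤ t^2 * g t := mul_nonneg (sq_nonneg t) (hgnn t)
    have h3 : (0:ℝ) ≤ 2/(α-1) := by positivity
    simp only [hE_def]
    nlinarith [mul_nonneg h3 h2, mul_nonneg hα1.le h1]
  -- key estimate
  have hkey : ∀ ε T : ℝ, 0 < ε → ε ≤ T → c * (∫ s in ε..T, s * g s) ≤ E ε := by
    intro ε T hε hT
    have hTpos : 0 < T := lt_of_lt_of_le hε hT
    have h1 : F T ≤ F ε := hFanti (mem_Ioi.2 hε) (mem_Ioi.2 hTpos) hT
    have h1' : E T + W T ≤ E ε + W ε := h1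
    have h2 : W T - W ε = ∫ s in ε..T, c * (s * g s) :=
      intervalIntegral.integral_interval_sub_left (hIntc 1 T one_pos hTpos)
        (hIntc 1 ε one_pos hε)
    have h3 : (∫ s in ε..T, c * (s * g s)) = c * ∫ s in ε..T, s * g s :=
      intervalIntegral.integral_const_mul c _
    have h4 := hEnn T hTpos
    linarith
  -- limit of E at 0+
  have hEtend : Tendsto E (nhdsWithin 0 (Ioi 0)) (nhds ((α-1) * ‖x₀ - xstar‖^2)) := by
    have hg0 : Tendsto g (nhdsWithin 0 (Ioi 0)) (nhds (f x₀ - f xstar)) :=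
      ((hdiff.continuous.tendsto x₀).comp hx0).sub tendsto_const_nhds
    have hsq : Tendsto (fun ε : ℝ => ε^2) (nhdsWithin 0 (Ioi 0)) (nhds 0) := by
      have hc : Continuous fun ε : ℝ => ε^2 := continuous_pow 2
      have h : Tendsto (fun ε : ℝ => ε^2) (nhds (0:ℝ)) (nhds ((0:ℝ)^2)) := hc.tendsto 0
      simpa using h.mono_left nhdsWithin_le_nhds
    have h1 : Tendsto (fun ε : ℝ => ε^2 * g ε) (nhdsWithin 0 (Ioi 0)) (nhds 0) := by
      simpa using hsq.mul hg0
    have h2 : Tendsto u (nhdsWithin 0 (Ioi 0)) (nhds (x₀ - xstar)) := by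
      have ha : Tendsto (fun ε => x ε - xstar) (nhdsWithin 0 (Ioi 0)) (nhds (x₀ - xstar)) :=
        hx0.sub tendsto_const_nhds
      have hb : Tendsto (fun ε : ℝ => ((α-1)⁻¹ * ε) • v ε) (nhdsWithin 0 (Ioi 0)) (nhds 0) := by
        have heq : (fun ε : ℝ => ((α-1)⁻¹ * ε) • v ε) = fun ε : ℝ => (α-1)⁻¹ • (ε • v ε) := by
          funext ε; rw [mul_smul]
        rw [heq]
        simpa using hv0.const_smul ((α-1)⁻¹)
      simpa using ha.add hb
    have h3 : Tendsto (fun ε => (inner ℝ (u ε) (u ε) : ℝ)) (nhdsWithin 0 (Ioi 0))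
        (nhds (inner ℝ (x₀ - xstar) (x₀ - xstar) : ℝ)) := h2.inner h2
    have h4 := (h1.const_mul (2/(α-1))).add (h3.const_mul (α-1))
    have h5 : (2/(α-1)) * (0:ℝ) + (α-1) * (inner ℝ (x₀ - xstar) (x₀ - xstar) : ℝ)
        = (α-1) * ‖x₀ - xstar‖^2 := by
      rw [real_inner_self_eq_norm_sq]; ring
    rw [h5] at h4
    exact h4
  set B : ℝ := (α - 1) ^ 2 * ‖x₀ - xstar‖ ^ 2 / (2 * (α - 3)) with hB_def
  -- per-interval bound
  have hBn : ∀ n : ℕ, (∫ s in (((n:ℝ)+1)⁻¹)..((n:ℝ)+1), s * g s) ≤ B := by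
    intro n
    set a : ℝ := ((n:ℝ)+1)⁻¹ with ha_def
    have hn1 : (0:ℝ) < (n:ℝ)+1 := by positivity
    have ha : 0 < a := by rw [ha_def]; positivity
    have hab : a ≤ (n:ℝ)+1 := by
      rw [ha_def]
      calc ((n:ℝ)+1)⁻¹ ≤ 1 := by
            rw [inv_le_one_iff₀]; right; linarith
        _ ≤ (n:ℝ)+1 := by linarith [Nat.cast_nonneg (α := ℝ) n]
    have hev : ∀ᶠ ε in nhdsWithin 0 (Ioi 0),
        c * (∫ s in a..((n:ℝ)+1), s * g s) ≤ E ε := by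
      filter_upwards [Ioc_mem_nhdsGT_of_mem (Set.mem_Ico.2 ⟨le_refl (0:ℝ), ha⟩)] with ε hε
      have hε0 : 0 < ε := hε.1
      have hεa : ε ≤ a := hε.2
      have h1 : (∫ s in a..((n:ℝ)+1), s * g s) ≤ ∫ s in ε..((n:ℝ)+1), s * g s := by
        have hadj := intervalIntegral.integral_add_adjacent_intervals
          (hInt ε a hε0 ha) (hInt a ((n:ℝ)+1) ha hn1)
        have hnn : 0 ≤ ∫ s in ε..a, s * g s := by
          apply intervalIntegral.integral_nonneg hεa
          intro s hs
          exact mul_nonneg (le_trans hε0.le hs.1) (hgnn s)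
        linarith
      calc c * (∫ s in a..((n:ℝ)+1), s * g s)
          ≤ c * (∫ s in ε..((n:ℝ)+1), s * g s) := by
            exact mul_le_mul_of_nonneg_left h1 hc.le
        _ ≤ E ε := hkey ε ((n:ℝ)+1) hε0 (le_trans hεa hab)
    have hle : c * (∫ s in a..((n:ℝ)+1), s * g s) ≤ (α-1) * ‖x₀ - xstar‖^2 :=
      ge_of_tendsto hEtend hev
    have hBc : B * c = (α-1) * ‖x₀ - xstar‖^2 := by
      rw [hB_def, hc_def]
      field_simp
    have h6 : (∫ s in a..((n:ℝ)+1), s * g s) * c ≤ B * c := by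
      rw [hBc]; linarith [hle]
    exact le_of_mul_le_mul_right h6 hc
  -- assemble the lintegral bound
  set sn : ℕ → Set ℝ := fun n => Ioc (((n:ℝ)+1)⁻¹) ((n:ℝ)+1) with hsn_def
  have hsm : ∀ n, MeasurableSet (sn n) := fun n => measurableSet_Ioc
  have hsub : ∀ n, sn n ⊆ Ioi 0 := by
    intro n t ht
    have : (0:ℝ) < ((n:ℝ)+1)⁻¹ := by positivity
    exact lt_trans this ht.1
  have hmono : ∀ m n : ℕ, m ≤ n → sn m ⊆ sn n := by
    intro m n hmn
    apply Ioc_subset_Ioc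
    · apply inv_anti₀ (by positivity)
      exact_mod_cast by exact_mod_cast add_le_add_left (Nat.cast_le.2 hmn) 1
    · exact_mod_cast add_le_add_left (Nat.cast_le.2 hmn) 1
  have hcover : Ioi (0:ℝ) ⊆ ⋃ n, sn n := by
    intro t ht
    obtain ⟨n, hn⟩ := exists_nat_ge (max t t⁻¹)
    refine Set.mem_iUnion.2 ⟨n, ?_, ?_⟩
    · have h1 : t⁻¹ ≤ (n:ℝ) := le_trans (le_max_right _ _) hn
      have h2 : t⁻¹ < (n:ℝ)+1 := lt_of_le_of_lt h1 (by linarith)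
      have htpos : (0:ℝ) < t := ht
      calc ((n:ℝ)+1)⁻¹ < (t⁻¹)⁻¹ := by
            apply inv_strictAnti₀ (inv_pos.2 htpos) h2
        _ = t := inv_inv t
    · exact le_trans (le_trans (le_max_left t t⁻¹) hn) (by linarith)
  have hGcont : ContinuousOn (fun t => t * g t) (Ioi 0) :=
    continuousOn_of_forall_continuousAt (fun t ht => hwc t ht)
  have hGm : AEMeasurable (fun t => ENNReal.ofReal (t * g t)) (volume.restrict (Ioi 0)) :=
    ENNReal.measurable_ofReal.comp_aemeasurable (hGcont.aemeasurable measurableSet_Ioi)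
  have hIn : ∀ n : ℕ, (∫⁻ t in sn n, ENNReal.ofReal (t * g t)) ≤ ENNReal.ofReal B := by
    intro n
    have hn1 : (0:ℝ) < (n:ℝ)+1 := by positivity
    have ha : (0:ℝ) < ((n:ℝ)+1)⁻¹ := by positivity
    have hcontIcc : ContinuousOn (fun t => t * g t) (Icc (((n:ℝ)+1)⁻¹) ((n:ℝ)+1)) := by
      intro t ht
      exact (hwc t (lt_of_lt_of_le ha ht.1)).continuousWithinAt
    have hInteg : IntegrableOn (fun t => t * g t) (sn n) volume :=
      (hcontIcc.integrableOn_Icc).mono_set Ioc_subset_Icc_self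
    have hnnae : 0 ≤ᵐ[volume.restrict (sn n)] (fun t => t * g t) := by
      filter_upwards [ae_restrict_mem (hsm n)] with t ht
      exact mul_nonneg (le_of_lt (lt_of_lt_of_le ha ht.1.le)) (hgnn t)
    have heq : ENNReal.ofReal (∫ t in sn n, t * g t)
        = ∫⁻ t in sn n, ENNReal.ofReal (t * g t) :=
      ofReal_integral_eq_lintegral_ofReal hInteg hnnae
    rw [← heq]
    apply ENNReal.ofReal_le_ofReal
    have hab : ((n:ℝ)+1)⁻¹ ≤ (n:ℝ)+1 := by
      calc ((n:ℝ)+1)⁻¹ ≤ 1 := by rw [inv_le_one_iff₀]; right; linarith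
        _ ≤ (n:ℝ)+1 := by linarith [Nat.cast_nonneg (α := ℝ) n]
    have := hBn n
    rwa [intervalIntegral.integral_of_le hab] at this
  -- monotone convergence
  calc ∫⁻ t in Ioi (0:ℝ), ENNReal.ofReal (t * (f (x t) - f xstar))
      = ∫⁻ t in Ioi (0:ℝ), ENNReal.ofReal (t * g t) := rfl
    _ = ∫⁻ t in Ioi (0:ℝ), ⨆ n, (sn n).indicator (fun r => ENNReal.ofReal (r * g r)) t := by
        apply setLIntegral_congr_fun measurableSet_Ioi
        intro t ht
        obtain ⟨m, hm⟩ := Set.mem_iUnion.1 (hcover ht)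
        refine le_antisymm ?_ ?_
        · apply le_iSup_of_le m
          rw [Set.indicator_of_mem hm]
        · apply iSup_le
          intro n
          classical
          by_cases h : t ∈ sn n
          · rw [Set.indicator_of_mem h]
          · rw [Set.indicator_of_notMem h]; exact zero_le
    _ = ⨆ n, ∫⁻ t in Ioi (0:ℝ), (sn n).indicator (fun r => ENNReal.ofReal (r * g r)) t := by
        apply lintegral_iSup'
        · exact fun n => hGm.indicator (hsm n)
        · apply Eventually.of_forall
          intro t
          intro m n hmn
          dsimp only
          classical
          by_cases h : t ∈ sn m
          · rw [Set.indicator_of_mem h, Set.indicator_of_mem (hmono m n hmn h)]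
          · rw [Set.indicator_of_notMem h]; exact zero_le
    _ = ⨆ n, ∫⁻ t in sn n, ENNReal.ofReal (t * g t) := by
        congr 1
        funext n
        rw [lintegral_indicator (hsm n)]
        rw [Measure.restrict_restrict (hsm n), Set.inter_eq_left.2 (hsub n)]
    _ ≤ ENNReal.ofReal ((α - 1) ^ 2 * ‖x₀ - xstar‖ ^ 2 / (2 * (α - 3))) := by
        rw [← hB_def]
        exact iSup_le hIn
end

section
/- Let H be a real Hilbert space, f : H → [0,∞) a convex differentiable non-negative function, α > 0, and let x : (0,∞) → H be a twice differentiable solution of the heavy ball ODE x''(t) = −(α/t)·x'(t) − ∇f(x(t)) with lim_{t→0⁺} x(t) = x₀ and lim_{t→0⁺} x'(t) = 0. Then ‖x'(t)‖ ≤ √(2·f(x₀)) and ‖x(t) − x₀‖ ≤ √(2·f(x₀))·t for all t > 0, and consequently f(x(t)) ≥ inf { f(z) : z ∈ H, ‖z − x₀‖ ≤ √(2·f(x₀))·t } for all t > 0. -/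
open Filter MeasureTheory Set

local notation "⟪" a ", " b "⟫" => @inner ℝ _ _ a b

/-- Finite speed of heavy ball trajectories. For a convex differentiable
non-negative `f` on a real Hilbert space, `α > 0`, and a solution of
`x'' = −(α/t)·x' − ∇f(x)` with `x(t) → x₀` and `x'(t) → 0` as `t → 0⁺`, one has
`‖x'(t)‖ ≤ √(2 f(x₀))`, `‖x(t) − x₀‖ ≤ √(2 f(x₀))·t`, and consequently
`f(x(t)) ≥ inf { f(z) : ‖z − x₀‖ ≤ √(2 f(x₀))·t }` for all `t > 0`. -/
theorem heavy_ball_finite_speed_lower_bound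
    (H : Type*) [NormedAddCommGroup H] [InnerProductSpace ℝ H] [CompleteSpace H]
    (f : H → ℝ) (hconv : ConvexOn ℝ Set.univ f) (hdiff : Differentiable ℝ f)
    (hnonneg : ∀ z : H, 0 ≤ f z)
    (α : ℝ) (hα : 0 < α)
    (x v : ℝ → H)
    (hx : ∀ t > (0:ℝ), HasDerivAt x (v t) t)
    (hv : ∀ t > (0:ℝ), HasDerivAt v (-(α / t) • v t - gradient f (x t)) t)
    (x₀ : H)
    (hx0 : Filter.Tendsto x (nhdsWithin 0 (Set.Ioi 0)) (nhds x₀))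
    (hv0 : Filter.Tendsto v (nhdsWithin 0 (Set.Ioi 0)) (nhds 0)) :
    (∀ t > (0:ℝ), ‖v t‖ ≤ Real.sqrt (2 * f x₀)) ∧
    (∀ t > (0:ℝ), ‖x t - x₀‖ ≤ Real.sqrt (2 * f x₀) * t) ∧
    (∀ t > (0:ℝ),
      sInf (f '' {z : H | ‖z - x₀‖ ≤ Real.sqrt (2 * f x₀) * t}) ≤ f (x t)) := by
  set E : ℝ → ℝ := fun t => (1 / 2) * ⟪v t, v t⟫ + f (x t) with hE
  -- derivative of the energy
  have hE' : ∀ t > (0:ℝ), HasDerivAt E (-(α / t) * ⟪v t, v t⟫) t := by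
    intro t ht
    have h1 : HasDerivAt (fun s => ⟪v s, v s⟫)
        (⟪v t, -(α / t) • v t - gradient f (x t)⟫ +
          ⟪-(α / t) • v t - gradient f (x t), v t⟫) t :=
      HasDerivAt.inner ℝ (hv t ht) (hv t ht)
    have h2 : HasDerivAt (fun s => f (x s)) ⟪gradient f (x t), v t⟫ t := by
      have hg : HasFDerivAt f (InnerProductSpace.toDual ℝ H (gradient f (x t))) (x t) :=
        (hdiff (x t)).hasGradientAt.hasFDerivAt
      simpa [InnerProductSpace.toDual_apply_apply, Function.comp_def] using hg.comp_hasDerivAt t (hx t ht)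
    have h3 := (h1.const_mul (1/2 : ℝ)).add h2
    convert h3 using 1
    · rfl
    · rfl
    · rfl
    simp only [inner_sub_right, inner_sub_left, inner_smul_right, inner_smul_left,
      starRingEnd_apply, star_trivial, real_inner_comm (v t) (gradient f (x t))]
    ring
  -- E is antitone on (0, ∞)
  have hanti : AntitoneOn E (Set.Ioi 0) := by
    apply antitoneOn_of_deriv_nonpos (convex_Ioi 0)
    · exact fun t ht => ((hE' t ht).continuousAt).continuousWithinAt
    · intro t ht
      rw [interior_Ioi] at ht
      exact ((hE' t ht).differentiableAt).differentiableWithinAt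
    · intro t ht
      rw [interior_Ioi] at ht
      rw [(hE' t ht).deriv]
      have : 0 ≤ ⟪v t, v t⟫ := real_inner_self_nonneg
      have hαt : 0 < α / t := div_pos hα ht
      nlinarith
  -- limit of E at 0⁺
  have hElim : Filter.Tendsto E (nhdsWithin 0 (Set.Ioi 0)) (nhds (f x₀)) := by
    have h1 : Filter.Tendsto (fun t => (1/2 : ℝ) * ⟪v t, v t⟫) (nhdsWithin 0 (Set.Ioi 0))
        (nhds ((1/2 : ℝ) * ⟪(0:H), (0:H)⟫)) :=
      (((continuous_inner (𝕜 := ℝ) (E := H)).tendsto _).comp (hv0.prodMk_nhds hv0)).const_mul _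
    have h2 : Filter.Tendsto (fun t => f (x t)) (nhdsWithin 0 (Set.Ioi 0)) (nhds (f x₀)) :=
      (hdiff.continuous.tendsto _).comp hx0
    have h3 := h1.add h2
    rw [hE]
    convert h3 using 2
    simp
  -- E t ≤ f x₀ for all t > 0
  have hEle : ∀ t > (0:ℝ), E t ≤ f x₀ := by
    intro t ht
    refine ge_of_tendsto hElim ?_
    filter_upwards [Ioo_mem_nhdsGT_of_mem ⟨le_refl (0:ℝ), ht⟩] with s hs
    exact hanti hs.1 ht hs.2.le
  set C := Real.sqrt (2 * f x₀) with hC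
  have hvle : ∀ t > (0:ℝ), ‖v t‖ ≤ C := by
    intro t ht
    have h1 : ‖v t‖ ^ 2 ≤ 2 * f x₀ := by
      have := hEle t ht
      have h2 := hnonneg (x t)
      rw [hE] at this
      simp only [real_inner_self_eq_norm_sq] at this
      nlinarith
    calc ‖v t‖ = Real.sqrt (‖v t‖ ^ 2) := by rw [Real.sqrt_sq (norm_nonneg _)]
    _ ≤ C := Real.sqrt_le_sqrt h1
  have hxle : ∀ t > (0:ℝ), ‖x t - x₀‖ ≤ C * t := by
    intro t ht
    -- for 0 < s < t, ‖x t - x s‖ ≤ C * (t - s)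
    have key : ∀ s ∈ Set.Ioo (0:ℝ) t, ‖x t - x s‖ ≤ C * (t - s) := by
      intro s hs
      have h := norm_image_sub_le_of_norm_deriv_le_segment'
        (f := x) (f' := v) (a := s) (b := t) (C := C)
        (fun u hu => ((hx u (lt_of_lt_of_le hs.1 hu.1)).hasDerivWithinAt))
        (fun u hu => hvle u (lt_of_lt_of_le hs.1 hu.1)) t ⟨hs.2.le, le_refl t⟩
      simpa [norm_sub_rev] using h
    have h1 : Filter.Tendsto (fun s => ‖x t - x s‖) (nhdsWithin 0 (Set.Ioi 0))
        (nhds ‖x t - x₀‖) := (tendsto_const_nhds.sub hx0).norm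
    have h2 : Filter.Tendsto (fun s : ℝ => C * (t - s)) (nhdsWithin 0 (Set.Ioi 0))
        (nhds (C * t)) := by
      have hid : Filter.Tendsto (fun s : ℝ => s) (nhdsWithin 0 (Set.Ioi 0)) (nhds 0) :=
        tendsto_id.mono_left nhdsWithin_le_nhds
      have h3 : Filter.Tendsto (fun s : ℝ => t - s) (nhdsWithin 0 (Set.Ioi 0))
          (nhds (t - 0)) := tendsto_const_nhds.sub hid
      have := h3.const_mul C
      simpa using this
    refine le_of_tendsto_of_tendsto h1 h2 ?_
    filter_upwards [Ioo_mem_nhdsGT_of_mem ⟨le_refl (0:ℝ), ht⟩] with s hs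
    exact key s hs
  refine ⟨hvle, hxle, ?_⟩
  intro t ht
  apply csInf_le
  · exact ⟨0, fun y hy => by obtain ⟨z, _, rfl⟩ := hy; exact hnonneg z⟩
  · exact ⟨x t, hxle t ht, rfl⟩
end
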